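/- Let v ≥ 2 and m ≥ 2 be integers and γ ∈ ℤ. Define w_2 = (v−1)(γ+1) if v is odd, and w_2 = (v−1)(γ+1)(v−1−γ) if v is even. Suppose w_2 = s²·v_2 for some positive integer s and squarefree positive integer v_2, and suppose there is a prime p dividing v_2 that is self-conjugate modulo m. Then there exists no near conference matrix C_γ(v,m). -/

import Mathlib

open Matrix

/-- `C` is a near conference matrix `C_γ(v, m)`: the diagonal entries vanish, all
off-diagonal entries are complex `m`-th roots of unity, and
`C * Cᴴ = (v - 1 - γ) • I + γ • J`. -/
def IsNearConf (v m : ℕ) (γ : ℂ) (C : Matrix (Fin v) (Fin v) ℂ) : Prop :=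
  (∀ i, C i i = 0) ∧ (∀ i j, i ≠ j → C i j ^ m = 1) ∧
    C * C.conjTranspose =
      ((v : ℂ) - 1 - γ) • (1 : Matrix (Fin v) (Fin v) ℂ) + γ • Matrix.of (fun _ _ => (1 : ℂ))

/-- A prime `p` coprime to `m` is self-conjugate modulo `m` if its multiplicative order
`f` modulo `m` is even and `p ^ (f / 2) ≡ -1 (mod m)`. -/
def SelfConjugate (p m : ℕ) : Prop :=
  Nat.Coprime p m ∧ Even (orderOf (p : ZMod m)) ∧
    (p : ZMod m) ^ (orderOf (p : ZMod m) / 2) = -1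

open Polynomial

lemma comp_X_pow_prime_pow {p : ℕ} [Fact p.Prime] (k : ℕ) (f : (ZMod p)[X]) :
    f.comp (X ^ p ^ k) = f ^ p ^ k := by
  induction k with
  | zero => simp
  | succ k ih =>
    have h1 : (expand (ZMod p) (p ^ k)) ((expand (ZMod p) p) f) = expand (ZMod p) (p^k * p) f :=
      expand_expand (p^k) p f
    rw [pow_succ, ← expand_eq_comp_X_pow, ← h1, ZMod.expand_card, map_pow, expand_eq_comp_X_pow, ih, ← pow_mul]

lemma conj_aeval_pr {m : ℕ} {ζ : ℂ} (hζc : (starRingEnd ℂ) ζ = ζ ^ (m - 1)) (S : ℤ[X]) :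
    (starRingEnd ℂ) (Polynomial.aeval ζ S) = Polynomial.aeval ζ (S.comp (X ^ (m - 1))) := by
  rw [Polynomial.aeval_comp]
  simp only [map_pow, Polynomial.aeval_X]
  rw [← hζc, Polynomial.aeval_def, Polynomial.aeval_def, Polynomial.hom_eval₂]
  congr 1
  exact Subsingleton.elim _ _

lemma keyNT (m : ℕ) (hm : 2 ≤ m) (ζ : ℂ) (hζ : IsPrimitiveRoot ζ m)
    (p : ℕ) (hp : p.Prime) (hsc : SelfConjugate p m) :
    ∀ N : ℕ, ∀ n : ℤ, n.natAbs ≤ N → n ≠ 0 →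
      (∃ P : ℤ[X], (aeval ζ P) * (starRingEnd ℂ) (aeval ζ P) = (n : ℂ)) →
      Even (padicValInt p n) := by
  haveI : Fact p.Prime := ⟨hp⟩
  have hm0 : m ≠ 0 := by omega
  have hmpos : 0 < m := by omega
  haveI : NeZero m := ⟨hm0⟩
  have hpm : ¬ p ∣ m := (Nat.Prime.coprime_iff_not_dvd hp).mp hsc.1
  set q : ℕ := p ^ (orderOf ((p : ℕ) : ZMod m) / 2) with hqdef
  have hq1 : 1 ≤ q := Nat.one_le_pow _ _ hp.pos
  have hq : m ∣ q + 1 := by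
    have h2 := hsc.2.2
    have : ((q + 1 : ℕ) : ZMod m) = 0 := by
      rw [hqdef]
      push_cast
      rw [h2]; ring
    exact (ZMod.natCast_eq_zero_iff _ _).mp this
  obtain ⟨c, hc⟩ := hq
  have hc1 : 1 ≤ c := by
    rcases Nat.eq_zero_or_pos c with h | h
    · subst h; simp only [Nat.mul_zero] at hc; omega
    · exact h
  -- conjugate of ζ
  have hζ0 : ζ ≠ 0 := fun h => by
    have := hζ.pow_eq_one
    rw [h] at this
    simp [zero_pow hm0] at this
  have hζc : (starRingEnd ℂ) ζ = ζ ^ (m - 1) := by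
    have habs : ζ * (starRingEnd ℂ) ζ = 1 := by
      rw [Complex.mul_conj]
      norm_cast
      rw [Complex.normSq_eq_norm_sq]
      have : ‖ζ‖ = 1 := Complex.norm_eq_one_of_pow_eq_one hζ.pow_eq_one hm0
      rw [this]; norm_num
    have hpow : ζ * ζ ^ (m - 1) = 1 := by
      rw [← pow_succ']
      have : m - 1 + 1 = m := by omega
      rw [this, hζ.pow_eq_one]
    have := habs.trans hpow.symm
    exact mul_left_cancel₀ hζ0 this
  -- strong induction
  intro N
  induction N using Nat.strong_induction_on with
  | _ N ih =>
    intro n hnN hn0 ⟨P, hP⟩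
    by_cases hpn : (p : ℤ) ∣ n
    · -- key divisibility in ℤ[X]
      have hconj := conj_aeval_pr hζc P
      have hF : aeval ζ (P * P.comp (X ^ (m - 1)) - C n) = 0 := by
        simp only [_root_.map_sub, _root_.map_mul, aeval_C]
        rw [← hconj, hP]
        simp
      have hdvd : cyclotomic m ℤ ∣ P * P.comp (X ^ (m - 1)) - C n := by
        rw [cyclotomic_eq_minpoly hζ hmpos]
        exact minpoly.isIntegrallyClosed_dvd (hζ.isIntegral hmpos) hF
      obtain ⟨Q, hQ⟩ := hdvd
      -- reduce mod p
      set ρ : ℤ →+* ZMod p := Int.castRingHom (ZMod p) with hρ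
      set Pb : (ZMod p)[X] := P.map ρ with hPb
      have hmapQ : Pb * Pb.comp (X ^ (m - 1)) = cyclotomic m (ZMod p) * Q.map ρ := by
        have := congrArg (Polynomial.map ρ) hQ
        rw [Polynomial.map_sub, Polynomial.map_mul, Polynomial.map_mul, map_comp,
          Polynomial.map_pow, map_X, map_C, map_cyclotomic] at this
        have hn0' : ρ n = 0 := by
          rw [hρ]
          simp only [Int.coe_castRingHom]
          exact (ZMod.intCast_zmod_eq_zero_iff_dvd _ _).mpr (by exact_mod_cast hpn)
        rw [hn0', map_zero, sub_zero] at this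
        exact this
      have h1 : cyclotomic m (ZMod p) ∣ Pb * Pb.comp (X ^ (m - 1)) := ⟨Q.map ρ, hmapQ⟩
      -- Pb.comp (X^q) = Pb^q
      have hqcomp : Pb.comp (X ^ q) = Pb ^ q := comp_X_pow_prime_pow _ _
      -- cyclotomic ∣ Pb^q - Pb.comp (X^(m-1))
      have hXdvd : (X : (ZMod p)[X]) ^ m - 1 ∣ X ^ q - X ^ (m - 1) := by
        obtain ⟨d, rfl⟩ : ∃ d, c = d + 1 := ⟨c - 1, by omega⟩
        have hmd : q + 1 = m * d + m := by rw [hc]; ring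
        have hqe : q = (m - 1) + m * d := by
          set e := m * d with he
          omega
        rw [hqe, pow_add, ← mul_one ((X : (ZMod p)[X]) ^ (m-1)), mul_assoc]
        rw [one_mul, ← mul_sub]
        apply Dvd.dvd.mul_left
        rw [pow_mul]
        have := sub_dvd_pow_sub_pow ((X : (ZMod p)[X]) ^ m) 1 d
        simpa using this
      have hcomp_dvd : (X : (ZMod p)[X]) ^ q - X ^ (m - 1) ∣
          Pb.comp (X ^ q) - Pb.comp (X ^ (m - 1)) := by
        have := sub_dvd_eval_sub ((X : (ZMod p)[X]) ^ q) (X ^ (m-1)) (Pb.map C)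
        rwa [eval_map, eval_map] at this
      have hstep : cyclotomic m (ZMod p) ∣ Pb ^ q - Pb.comp (X ^ (m - 1)) := by
        rw [← hqcomp]
        exact dvd_trans (dvd_trans (cyclotomic.dvd_X_pow_sub_one m (ZMod p)) hXdvd) hcomp_dvd
      have h2 : cyclotomic m (ZMod p) ∣ Pb ^ (q + 1) := by
        have : Pb ^ (q+1) = Pb * Pb.comp (X ^ (m-1)) + Pb * (Pb ^ q - Pb.comp (X ^ (m-1))) := by
          ring
        rw [this]
        exact dvd_add h1 (Dvd.dvd.mul_left hstep Pb)
      have h3 : Squarefree (cyclotomic m (ZMod p)) := by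
        have hsep : ((X : (ZMod p)[X]) ^ m - 1).Separable := by
          apply X_pow_sub_one_separable_iff.mpr
          intro h
          exact hpm ((ZMod.natCast_eq_zero_iff _ _).mp h)
        exact (hsep.of_dvd (cyclotomic.dvd_X_pow_sub_one m (ZMod p))).squarefree
      have h4 : cyclotomic m (ZMod p) ∣ Pb := (h3.dvd_pow_iff_dvd (Nat.succ_ne_zero q)).mp h2
      obtain ⟨T, hT⟩ := h4
      obtain ⟨T0, rfl⟩ := Polynomial.map_surjective ρ ZMod.intCast_surjective T
      have hcoeff : ∀ i, (p : ℤ) ∣ (P - cyclotomic m ℤ * T0).coeff i := by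
        intro i
        have hmap0 : (P - cyclotomic m ℤ * T0).map ρ = 0 := by
          rw [Polynomial.map_sub, Polynomial.map_mul, map_cyclotomic, ← hT, hPb, sub_self]
        have := congrArg (fun g => Polynomial.coeff g i) hmap0
        simp only [coeff_map, coeff_zero] at this
        exact_mod_cast (ZMod.intCast_zmod_eq_zero_iff_dvd _ _).mp this
      obtain ⟨S, hS⟩ := (C_dvd_iff_dvd_coeff ((p : ℤ)) _).mpr hcoeff
      have hPS : P = cyclotomic m ℤ * T0 + C (p : ℤ) * S := by linear_combination hS
      have hΦ0 : aeval ζ (cyclotomic m ℤ) = 0 := by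
        rw [cyclotomic_eq_minpoly hζ hmpos]
        exact minpoly.aeval ℤ ζ
      set β : ℂ := aeval ζ S with hβdef
      have hβ : aeval ζ P = (p : ℂ) * β := by
        rw [hPS]
        simp [hΦ0, hβdef]
      have hn2 : ((p : ℂ))^2 * (β * (starRingEnd ℂ) β) = (n : ℂ) := by
        rw [← hP, hβ]
        simp only [_root_.map_mul]
        rw [Complex.conj_natCast]
        ring
      -- β * conj β is an integer
      have hζint : IsIntegral ℤ ζ := hζ.isIntegral hmpos
      have hζcint : IsIntegral ℤ ((starRingEnd ℂ) ζ) := by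
        rw [hζc]; exact hζint.pow _
      have hβint : IsIntegral ℤ β := by
        have hle : Algebra.adjoin ℤ {ζ} ≤ integralClosure ℤ ℂ :=
          Algebra.adjoin_le (Set.singleton_subset_iff.mpr hζint)
        have : β ∈ Algebra.adjoin ℤ {ζ} := by
          rw [Algebra.adjoin_singleton_eq_range_aeval]
          exact Set.mem_range_self S
        exact hle this
      have hβcint : IsIntegral ℤ ((starRingEnd ℂ) β) := by
        have h1' : (starRingEnd ℂ) β = aeval ζ (S.comp (X ^ (m-1))) := conj_aeval_pr hζc S
        have hle : Algebra.adjoin ℤ {ζ} ≤ integralClosure ℤ ℂ :=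
          Algebra.adjoin_le (Set.singleton_subset_iff.mpr hζint)
        have : aeval ζ (S.comp (X ^ (m-1))) ∈ Algebra.adjoin ℤ {ζ} := by
          rw [Algebra.adjoin_singleton_eq_range_aeval]
          exact Set.mem_range_self _
        rw [h1']
        exact hle this
      have hint : IsIntegral ℤ (β * (starRingEnd ℂ) β) := hβint.mul hβcint
      -- pull back to an integer z with n = p^2 z
      have hp2C : ((p : ℂ))^2 ≠ 0 := pow_ne_zero _ (Nat.cast_ne_zero.mpr hp.pos.ne')
      set t : ℚ := (n : ℚ) / ((p : ℚ))^2 with htdef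
      have halg : ∀ r : ℚ, algebraMap ℚ ℂ r = (r : ℂ) := fun r => eq_ratCast _ r
      have ht : ((t : ℚ) : ℂ) = β * (starRingEnd ℂ) β := by
        rw [htdef]
        push_cast
        rw [div_eq_iff hp2C, ← hn2]; ring
      have htint : IsIntegral ℤ t := by
        apply (isIntegral_algebraMap_iff (algebraMap ℚ ℂ).injective).mp
        rw [halg t, ht]
        exact hint
      obtain ⟨z, hz⟩ := IsIntegrallyClosed.isIntegral_iff.mp htint
      have hnz : n = (p : ℤ)^2 * z := by
        have : (n : ℚ) = ((p : ℚ))^2 * (z : ℚ) := by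
          have hzq : (z : ℚ) = t := by exact_mod_cast hz
          have hpQ : ((p:ℚ)) ≠ 0 := Nat.cast_ne_zero.mpr hp.pos.ne'
          rw [hzq, htdef]
          field_simp
        exact_mod_cast this
      have hz0 : z ≠ 0 := by
        intro h
        rw [h, mul_zero] at hnz
        exact hn0 hnz
      have hzlt : z.natAbs < n.natAbs := by
        rw [hnz, Int.natAbs_mul]
        have : ((p:ℤ)^2).natAbs = p^2 := by
          rw [Int.natAbs_pow]; rfl
        rw [this]
        have hz1 : 1 ≤ z.natAbs := Int.natAbs_pos.mpr hz0
        have hp2 : 4 ≤ p ^ 2 := by nlinarith [hp.two_le]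
        nlinarith
      have hzval : Even (padicValInt p z) := by
        apply ih z.natAbs (by omega) z (le_refl _) hz0
        refine ⟨S, ?_⟩
        rw [← hβdef]
        have hzq : (z : ℚ) = t := by exact_mod_cast hz
        have : ((z : ℚ) : ℂ) = β * (starRingEnd ℂ) β := by
          rw [hzq]; exact ht
        exact_mod_cast this.symm
      have hval : padicValInt p n = 2 + padicValInt p z := by
        rw [hnz, padicValInt.mul (pow_ne_zero _ (by exact_mod_cast hp.pos.ne')) hz0]
        congr 1
        have : ((p:ℤ))^2 = ((p^2 : ℕ) : ℤ) := by push_cast; ring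
        rw [this, padicValInt.of_nat, padicValNat.prime_pow]
      rw [hval]
      rcases hzval with ⟨k, hk⟩
      exact ⟨k + 1, by omega⟩
    · rw [padicValInt.eq_zero_of_not_dvd hpn]
      exact Even.zero

lemma det_smul_one_add_smul_J (v : ℕ) (hv : 2 ≤ v) (a b : ℂ) :
    Matrix.det (a • (1 : Matrix (Fin v) (Fin v) ℂ) + b • Matrix.of (fun _ _ => (1:ℂ)))
      = a ^ (v - 1) * (a + v * b) := by
  by_cases ha : a = 0
  · subst ha
    simp only [zero_smul, zero_add]
    have h1 : Matrix.det (b • Matrix.of (fun _ _ => (1:ℂ)) : Matrix (Fin v) (Fin v) ℂ) = 0 := by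
      apply Matrix.det_zero_of_row_eq (i := ⟨0, by omega⟩) (j := ⟨1, by omega⟩)
      · simp [Fin.ext_iff]
      · funext j; simp
    rw [h1, zero_pow (by omega : v - 1 ≠ 0), zero_mul]
  · have h1 : a • (1 : Matrix (Fin v) (Fin v) ℂ) + b • Matrix.of (fun _ _ => (1:ℂ))
        = a • (1 + Matrix.replicateCol Unit (fun _ => b/a) * Matrix.replicateRow Unit (fun _ => (1:ℂ))) := by
      ext i j
      simp only [Matrix.add_apply, Matrix.smul_apply, Matrix.of_apply, smul_eq_mul,
        Matrix.mul_apply, Matrix.replicateCol_apply, Matrix.replicateRow_apply, Finset.univ_unique,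
        Finset.sum_const, Finset.card_singleton, one_smul]
      field_simp
    rw [h1, Matrix.det_smul]
    rw [Matrix.det_one_add_replicateCol_mul_replicateRow (ι := Unit) (fun _ : Fin v => b/a) (fun _ : Fin v => (1:ℂ))]
    have h2 : (fun _ : Fin v => (1:ℂ)) ⬝ᵥ (fun _ : Fin v => b/a) = (v : ℂ) * (b / a) := by
      simp [dotProduct, Finset.sum_const, Fintype.card_fin]
    rw [h2, Fintype.card_fin]
    have h3 : a ^ v = a ^ (v - 1) * a := by
      conv_lhs => rw [show v = (v - 1) + 1 by omega]
      rw [pow_succ]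
    rw [h3]
    field_simp

/-- Brock's criterion for near conference matrices: with
`w₂ = (v-1)(γ+1)` for odd `v` and `w₂ = (v-1)(γ+1)(v-1-γ)` for even `v`, if the
squarefree part `v₂` of `w₂` has a prime divisor that is self-conjugate modulo `m`,
then no `C_γ(v, m)` exists. -/
theorem stmt_7 (v m : ℕ) (hv : 2 ≤ v) (hm : 2 ≤ m) (γ : ℤ) (w2 : ℤ)
    (hw2 : w2 = if Odd v then ((v : ℤ) - 1) * (γ + 1)
      else ((v : ℤ) - 1) * (γ + 1) * ((v : ℤ) - 1 - γ))
    (s v2 : ℕ) (hs : 0 < s) (hv2 : 0 < v2) (hsf : Squarefree v2)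
    (hfac : w2 = (s : ℤ) ^ 2 * v2)
    (p : ℕ) (hp : p.Prime) (hpv2 : p ∣ v2) (hsc : SelfConjugate p m) :
    ¬∃ C : Matrix (Fin v) (Fin v) ℂ, IsNearConf v m (γ : ℂ) C := by
  classical
  rintro ⟨C, hdiag, hroot, heq⟩
  haveI : Fact p.Prime := ⟨hp⟩
  have hm0 : m ≠ 0 := by omega
  haveI : NeZero m := ⟨hm0⟩
  set ζ : ℂ := Complex.exp (2 * Real.pi * Complex.I / m) with hζdef
  have hζ : IsPrimitiveRoot ζ m := Complex.isPrimitiveRoot_exp m hm0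
  set i0 : Fin v := ⟨0, by omega⟩ with hi0
  set i1 : Fin v := ⟨1, by omega⟩ with hi1
  have h01 : i0 ≠ i1 := by simp [hi0, hi1, Fin.ext_iff]
  set a : ℂ := (v : ℂ) - 1 - (γ : ℂ) with hadef
  have hG : ∀ i j, (C * C.conjTranspose) i j = a * (if i = j then 1 else 0) + (γ : ℂ) := by
    intro i j
    rw [heq]
    simp only [Matrix.add_apply, Matrix.smul_apply, Matrix.of_apply, smul_eq_mul,
      Matrix.one_apply, mul_one]
  have hGm : ∀ i j, (C * C.conjTranspose) i j
      = ∑ k, C i k * (starRingEnd ℂ) (C j k) := by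
    intro i j
    rw [Matrix.mul_apply]
    refine Finset.sum_congr rfl fun k _ => ?_
    rw [Matrix.conjTranspose_apply, starRingEnd_apply]
  by_cases ha : a = 0
  · -- degenerate case: rows 0 and 1 must coincide
    have hzero : ∑ j, Complex.normSq (C i0 j - C i1 j) = 0 := by
      have hexp : (∑ j, ((Complex.normSq (C i0 j - C i1 j) : ℂ)))
          = (C * C.conjTranspose) i0 i0 - (C * C.conjTranspose) i0 i1
            - (C * C.conjTranspose) i1 i0 + (C * C.conjTranspose) i1 i1 := by
        rw [hGm, hGm, hGm, hGm, ← Finset.sum_sub_distrib, ← Finset.sum_sub_distrib,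
          ← Finset.sum_add_distrib]
        congr 1
        funext k
        rw [← Complex.mul_conj]
        simp only [map_sub]
        ring
      have h4 : (∑ j, ((Complex.normSq (C i0 j - C i1 j) : ℂ))) = 0 := by
        rw [hexp, hG i0 i0, hG i0 i1, hG i1 i0, hG i1 i1]
        simp only [if_pos rfl, if_neg h01, if_neg h01.symm, if_pos rfl]
        rw [ha]; ring
      have h5 : ((∑ j, Complex.normSq (C i0 j - C i1 j) : ℝ) : ℂ) = 0 := by
        push_cast
        exact h4
      exact_mod_cast h5
    have hterm : Complex.normSq (C i0 i1 - C i1 i1) = 0 := by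
      have := (Finset.sum_eq_zero_iff_of_nonneg
        (fun j _ => Complex.normSq_nonneg (C i0 j - C i1 j))).mp hzero i1 (Finset.mem_univ _)
      exact this
    have hC01 : C i0 i1 = 0 := by
      have := Complex.normSq_eq_zero.mp hterm
      rw [hdiag i1, sub_zero] at this
      exact this
    have := hroot i0 i1 h01
    rw [hC01, zero_pow hm0] at this
    exact zero_ne_one this
  · -- main case
    have hex : ∀ i j, i ≠ j → ∃ k, ζ ^ k = C i j := by
      intro i j h
      obtain ⟨k, _, hk⟩ := hζ.eq_pow_of_pow_eq_one (hroot i j h)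
      exact ⟨k, hk⟩
    set M : Matrix (Fin v) (Fin v) ℤ[X] :=
      fun i j => if h : i = j then 0 else Polynomial.X ^ (hex i j h).choose with hM
    set f : ℤ[X] →+* ℂ := (Polynomial.aeval ζ : ℤ[X] →ₐ[ℤ] ℂ).toRingHom with hf
    have hMC : M.map f = C := by
      funext i j
      by_cases h : i = j
      · subst h
        rw [Matrix.map_apply]
        simp [hM, Matrix.map_apply, hf, hdiag i]
      · rw [Matrix.map_apply]
        simp only [hM, Matrix.map_apply, dif_neg h, hf, AlgHom.toRingHom_eq_coe,
          RingHom.coe_coe, map_pow, Polynomial.aeval_X]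
        exact (hex i j h).choose_spec
    have hdetM : aeval ζ (Matrix.det M) = Matrix.det C := by
      have := RingHom.map_det f M
      rw [RingHom.mapMatrix_apply, hMC] at this
      exact this
    set aZ : ℤ := (v : ℤ) - 1 - γ with haZdef
    have haZ : aZ ≠ 0 := by
      intro h
      apply ha
      have : ((aZ : ℤ) : ℂ) = 0 := by rw [h]; simp
      rw [haZdef] at this
      push_cast at this
      rw [hadef]
      exact this
    set n : ℤ := aZ ^ (v - 1) * (((v : ℤ) - 1) * (γ + 1)) with hndef
    have hdet2 : Matrix.det C * (starRingEnd ℂ) (Matrix.det C) = (n : ℂ) := by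
      have h1 : Matrix.det (C * C.conjTranspose)
          = Matrix.det C * (starRingEnd ℂ) (Matrix.det C) := by
        rw [Matrix.det_mul, Matrix.det_conjTranspose]
        rfl
      rw [← h1, heq, det_smul_one_add_smul_J v hv]
      rw [hndef, haZdef, hadef]
      push_cast
      ring
    -- w2 and parity bookkeeping
    have hw2ne : w2 ≠ 0 := by
      rw [hfac]
      positivity
    obtain ⟨T, hnT, hT0⟩ : ∃ T : ℤ, n = T ^ 2 * (v2 : ℤ) ∧ T ≠ 0 := by
      rcases Nat.even_or_odd v with hev | hod
      · -- v even
        have hodd : ¬ Odd v := by simp [Nat.not_odd_iff_even.mpr hev]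
        rw [if_neg hodd] at hw2
        obtain ⟨k, hk⟩ : ∃ k, v - 2 = 2 * k := by
          obtain ⟨t, ht⟩ := hev
          exact ⟨t - 1, by omega⟩
        refine ⟨aZ ^ k * s, ?_, by positivity⟩
        have hv1 : v - 1 = 2 * k + 1 := by omega
        have hkey : ((v:ℤ) - 1) * (γ + 1) * aZ = (s:ℤ)^2 * v2 := hw2.symm.trans hfac
        rw [hndef, hv1]
        linear_combination (aZ ^ (2 * k)) * hkey
      · -- v odd
        rw [if_pos hod] at hw2
        obtain ⟨k, hk⟩ : ∃ k, v - 1 = 2 * k := by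
          obtain ⟨t, ht⟩ := hod
          exact ⟨t, by omega⟩
        refine ⟨aZ ^ k * s, ?_, by positivity⟩
        have hkey : ((v:ℤ) - 1) * (γ + 1) = (s:ℤ)^2 * v2 := hw2.symm.trans hfac
        rw [hndef, hk]
        linear_combination (aZ ^ (2 * k)) * hkey
    have hn0 : n ≠ 0 := by
      rw [hnT]
      have : (v2 : ℤ) ≠ 0 := by exact_mod_cast hv2.ne'
      positivity
    have heven : Even (padicValInt p n) :=
      keyNT m hm ζ hζ p hp hsc n.natAbs n le_rfl hn0
        ⟨Matrix.det M, by rw [hdetM]; exact hdet2⟩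
    have hvalv2 : padicValInt p (v2 : ℤ) = 1 := by
      rw [padicValInt.of_nat]
      rw [← Nat.factorization_def v2 hp]
      exact Nat.factorization_eq_one_of_squarefree hsf hp hpv2
    have hvalT : padicValInt p (T ^ 2) = 2 * padicValInt p T := by
      rw [sq, padicValInt.mul hT0 hT0]
      ring
    have hval : padicValInt p n = 2 * padicValInt p T + 1 := by
      rw [hnT, padicValInt.mul (pow_ne_zero _ hT0) (by exact_mod_cast hv2.ne'), hvalT, hvalv2]
    rw [hval] at heven
    obtain ⟨r, hr⟩ := heven
    omega
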